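/- Let V be a complex (or real) Banach space, d ≥ 1 an integer, ζ > 1 and C ≥ 0 real numbers. Let (t_ν)_{ν : Fin d → ℕ} be a family in V with ‖t_ν‖ ≤ C · ζ^{−|ν|} for every multi-index ν. Then for every μ ∈ [−1,1]^d the family (t_ν · μ^ν)_{ν} is summable in V, and for every integer m ≥ 0 and every set Λ of multi-indices containing all ν with |ν| < m, one has ‖Σ_{ν ∉ Λ} t_ν μ^ν‖ ≤ C · Σ_{n=m}^∞ C(n + d − 1, d − 1) ζ^{−n}. -/

import Mathlib

private lemma summable_pow_sum : ∀ (d : ℕ) {r : ℝ}, 0 ≤ r → r < 1 →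
    Summable (fun ν : Fin d → ℕ => r ^ (∑ j, ν j)) := by
  intro d
  induction d with
  | zero => intro r _ _; exact Summable.of_finite
  | succ d ih =>
    intro r hr0 hr1
    have hgeo : Summable (fun n : ℕ => r ^ n) := summable_geometric_of_lt_one hr0 hr1
    have hm := (hgeo.mul_of_nonneg (ih hr0 hr1) (fun n => pow_nonneg hr0 n)
      (fun ν => pow_nonneg hr0 _))
    refine (Fin.consEquiv (fun _ : Fin (d+1) => ℕ)).summable_iff.mp
      (hm.congr fun p => ?_)
    simp only [Function.comp, Fin.consEquiv_apply]
    rw [Fin.sum_cons, pow_add]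

private noncomputable instance fiberFintype (d N : ℕ) :
    Fintype {ν : Fin d → ℕ // ∑ j, ν j = N} :=
  Fintype.ofEquiv _ (Sym.equivNatSumOfFintype (Fin d) N)

private lemma fiber_card (d N : ℕ) (hd : 1 ≤ d) :
    Fintype.card {ν : Fin d → ℕ // ∑ j, ν j = N} = (N + d - 1).choose (d - 1) := by
  have h4 : (d + N - 1).choose N = (N + d - 1).choose (d - 1) := by
    have h2 : d + N - 1 = N + d - 1 := by omega
    have h3 : N + d - 1 - N = d - 1 := by omega
    rw [h2, ← h3, Nat.choose_symm (by omega)]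
  have h1 : Fintype.card {ν : Fin d → ℕ // ∑ j, ν j = N}
      = Fintype.card (Sym (Fin d) N) :=
    (Fintype.card_congr (Sym.equivNatSumOfFintype (Fin d) N)).symm
  rw [h1, Sym.card_sym_eq_choose, Fintype.card_fin, h4]

private def tailEquiv (d m : ℕ) :
    (Σ n : ℕ, {ν : Fin d → ℕ // ∑ j, ν j = m + n}) ≃ {ν : Fin d → ℕ // m ≤ ∑ j, ν j} where
  toFun σ := ⟨σ.2.1, by rw [σ.2.2]; omega⟩
  invFun ν := ⟨(∑ j, ν.1 j) - m, ν.1, by have := ν.2; omega⟩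
  left_inv := fun ⟨n, ν, hν⟩ => by
    have hn : (∑ j, ν j) - m = n := by omega
    subst hn
    rfl
  right_inv ν := rfl


/-- **Truncation error of the Taylor expansion.** Let `(t_ν)` be a family in a Banach space
with `‖t_ν‖ ≤ C ζ^{-|ν|}` for all multi-indices `ν ∈ ℕ^d`, where `ζ > 1`. Then for every
`μ ∈ [-1,1]^d` the family `(μ^ν • t_ν)` is summable, and for every `m ≥ 0` and every set `Λ`
of multi-indices containing all `ν` with `|ν| < m`, the tail satisfies
`‖∑_{ν ∉ Λ} μ^ν • t_ν‖ ≤ C ∑_{n=m}^∞ C(n+d-1, d-1) ζ^{-n}` (the series on the right being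
indexed here by `n = m + k`, `k ∈ ℕ`). -/
theorem taylor_truncation_error
    {V : Type*} [NormedAddCommGroup V] [NormedSpace ℝ V] [CompleteSpace V]
    (d : ℕ) (hd : 1 ≤ d) (ζ C : ℝ) (hζ : 1 < ζ) (hC : 0 ≤ C)
    (t : (Fin d → ℕ) → V)
    (ht : ∀ ν : Fin d → ℕ, ‖t ν‖ ≤ C * ζ ^ (-(∑ j, ν j : ℤ)))
    (μ : Fin d → ℝ) (hμ : ∀ j, μ j ∈ Set.Icc (-1 : ℝ) 1) :
    Summable (fun ν : Fin d → ℕ => (∏ j, μ j ^ ν j) • t ν) ∧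
    ∀ (m : ℕ) (Λ : Set (Fin d → ℕ)), {ν : Fin d → ℕ | ∑ j, ν j < m} ⊆ Λ →
      ‖∑' ν : {ν : Fin d → ℕ // ν ∉ Λ}, (∏ j, μ j ^ ν.1 j) • t ν.1‖ ≤
        C * ∑' n : ℕ, ((m + n + d - 1).choose (d - 1) : ℝ) * ζ ^ (-(m + n : ℤ)) := by
  have hζ0 : (0:ℝ) < ζ := lt_trans one_pos hζ
  set r : ℝ := ζ⁻¹ with hrdef
  have hr0 : 0 ≤ r := inv_nonneg.mpr hζ0.le
  have hr1 : r < 1 := inv_lt_one_of_one_lt₀ hζ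
  have key : ∀ n : ℕ, ζ ^ (-(n:ℤ)) = r ^ n := fun n => by
    rw [zpow_neg, zpow_natCast, hrdef, inv_pow]
  set g : (Fin d → ℕ) → ℝ := fun ν => C * r ^ (∑ j, ν j) with hgdef
  have hg0 : ∀ ν, 0 ≤ g ν := fun ν => mul_nonneg hC (pow_nonneg hr0 _)
  have hb : ∀ ν : Fin d → ℕ, ‖(∏ j, μ j ^ ν j) • t ν‖ ≤ g ν := by
    intro ν
    rw [norm_smul]
    have h1 : ‖∏ j, μ j ^ ν j‖ ≤ 1 := by
      rw [Real.norm_eq_abs, Finset.abs_prod]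
      refine Finset.prod_le_one (fun j _ => abs_nonneg _) (fun j _ => ?_)
      rw [abs_pow]
      exact pow_le_one₀ (abs_nonneg _) (abs_le.mpr ⟨(hμ j).1, (hμ j).2⟩)
    have hcast : (∑ j, (ν j : ℤ)) = ((∑ j, ν j : ℕ) : ℤ) := by push_cast; rfl
    calc ‖∏ j, μ j ^ ν j‖ * ‖t ν‖ ≤ 1 * (C * ζ ^ (-(∑ j, (ν j) : ℤ))) :=
          mul_le_mul h1 (ht ν) (norm_nonneg _) one_pos.le
      _ = g ν := by
          show 1 * (C * ζ ^ (-(∑ j, (ν j) : ℤ))) = C * r ^ (∑ j, ν j)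
          rw [one_mul, hcast, key]
  have hgsum : Summable g := (summable_pow_sum d hr0 hr1).mul_left C
  have hnorm : Summable (fun ν : Fin d → ℕ => ‖(∏ j, μ j ^ ν j) • t ν‖) :=
    Summable.of_nonneg_of_le (fun _ => norm_nonneg _) hb hgsum
  have hs : Summable (fun ν : Fin d → ℕ => (∏ j, μ j ^ ν j) • t ν) := hnorm.of_norm
  refine ⟨hs, ?_⟩
  intro m Λ hΛ
  have step1 : ‖∑' ν : {ν : Fin d → ℕ // ν ∉ Λ}, (∏ j, μ j ^ ν.1 j) • t ν.1‖ ≤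
      ∑' ν : {ν : Fin d → ℕ // ν ∉ Λ}, g ν.1 := by
    refine (norm_tsum_le_tsum_norm (hnorm.subtype _)).trans ?_
    exact Summable.tsum_le_tsum (fun ν => hb ν.1) (hnorm.subtype _) (hgsum.subtype _)
  have hmle : ∀ ν : Fin d → ℕ, ν ∉ Λ → m ≤ ∑ j, ν j := by
    intro ν hν
    by_contra h
    exact hν (hΛ (by simpa using Nat.lt_of_not_le h))
  have step2 : (∑' ν : {ν : Fin d → ℕ // ν ∉ Λ}, g ν.1) ≤
      ∑' ν : {ν : Fin d → ℕ // m ≤ ∑ j, ν j}, g ν.1 := by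
    have hinj : Function.Injective (fun ν : {ν : Fin d → ℕ // ν ∉ Λ} =>
        (⟨ν.1, hmle ν.1 ν.2⟩ : {ν : Fin d → ℕ // m ≤ ∑ j, ν j})) := by
      intro a b hab
      simp only [Subtype.mk.injEq] at hab
      exact Subtype.ext hab
    exact Summable.tsum_le_tsum_of_inj _ hinj (fun c _ => hg0 c.1) (fun b => le_rfl)
      (hgsum.subtype _) (hgsum.subtype _)
  have hsub : Summable (fun ν : {ν : Fin d → ℕ // m ≤ ∑ j, ν j} => g ν.1) := by
    have := hgsum.subtype {ν : Fin d → ℕ | m ≤ ∑ j, ν j}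
    exact this
  have hsigma : Summable ((fun ν : {ν : Fin d → ℕ // m ≤ ∑ j, ν j} => g ν.1) ∘
      (tailEquiv d m)) := ((tailEquiv d m).summable_iff).mpr hsub
  have step3 : (∑' ν : {ν : Fin d → ℕ // m ≤ ∑ j, ν j}, g ν.1) =
      ∑' n : ℕ, ((m + n + d - 1).choose (d - 1) : ℝ) * (C * r ^ (m + n)) := by
    have e1 : (∑' ν : {ν : Fin d → ℕ // m ≤ ∑ j, ν j}, g ν.1)
        = ∑' σ : Σ n : ℕ, {ν : Fin d → ℕ // ∑ j, ν j = m + n},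
            ((fun ν : {ν : Fin d → ℕ // m ≤ ∑ j, ν j} => g ν.1) ∘ (tailEquiv d m)) σ :=
      (Equiv.tsum_eq (tailEquiv d m) _).symm
    rw [e1, Summable.tsum_sigma hsigma]
    refine tsum_congr fun n => ?_
    have hval : ∀ ν : {ν : Fin d → ℕ // ∑ j, ν j = m + n},
        ((fun ν : {ν : Fin d → ℕ // m ≤ ∑ j, ν j} => g ν.1) ∘ (tailEquiv d m)) ⟨n, ν⟩
          = C * r ^ (m + n) := by
      intro ν
      show C * r ^ (∑ j, ν.1 j) = C * r ^ (m + n)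
      rw [ν.2]
    rw [tsum_congr hval, tsum_fintype, Finset.sum_const, Finset.card_univ,
      fiber_card d (m + n) hd, nsmul_eq_mul]
  have hend : C * ∑' n : ℕ, ((m + n + d - 1).choose (d - 1) : ℝ) * ζ ^ (-(m + n : ℤ)) =
      ∑' n : ℕ, ((m + n + d - 1).choose (d - 1) : ℝ) * (C * r ^ (m + n)) := by
    rw [← tsum_mul_left]
    refine tsum_congr fun n => ?_
    have : ζ ^ (-(m + n : ℤ)) = r ^ (m + n) := by
      have hc : (-(m + n : ℤ)) = (-((m + n : ℕ) : ℤ)) := by push_cast; ring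
      rw [hc, key]
    rw [this]; ring
  rw [hend]
  exact (step1.trans step2).trans_eq step3
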